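/- Let A ∈ ℝ^{m×n}, b ∈ ℝ^m and ε ≥ 0, and suppose that either A has full row rank or ε > 0, and that b lies in the range of A. Let C = {x ∈ ℝⁿ : ‖Ax − b‖ ≤ ε}. Then for every x ∈ ℝⁿ: if ‖Ax − b‖ ≤ ε then P_C(x) = x; otherwise P_C(x) = x − Aᵀ(AAᵀ + ε τ_x I)⁻¹(Ax − b), where τ_x is the unique positive real number satisfying 1 = τ_x ‖(AAᵀ + ε τ_x I)⁻¹(Ax − b)‖. -/

import Mathlib

open Matrix Set
open scoped RealInnerProductSpace

/-- Euclidean norm of a vector in ℝ^k. -/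
noncomputable def vecNorm {k : ℕ} (v : Fin k → ℝ) : ℝ := Real.sqrt (∑ i, v i ^ 2)

/-- `u` is the projection of `x` onto `C`: it belongs to `C` and minimizes the distance to `x`. -/
def IsProjOn {k : ℕ} (C : Set (Fin k → ℝ)) (x u : Fin k → ℝ) : Prop :=
  u ∈ C ∧ ∀ w ∈ C, vecNorm (u - x) ≤ vecNorm (w - x)

noncomputable def en {k : ℕ} (v : Fin k → ℝ) : EuclideanSpace ℝ (Fin k) :=
  (WithLp.equiv 2 (Fin k → ℝ)).symm v

lemma en_apply {k : ℕ} (v : Fin k → ℝ) (i : Fin k) : en v i = v i := rfl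

lemma en_sub {k : ℕ} (u v : Fin k → ℝ) : en (u - v) = en u - en v := rfl
lemma en_add {k : ℕ} (u v : Fin k → ℝ) : en (u + v) = en u + en v := rfl
lemma en_smul {k : ℕ} (c : ℝ) (v : Fin k → ℝ) : en (c • v) = c • en v := rfl
lemma en_zero {k : ℕ} : en (0 : Fin k → ℝ) = 0 := rfl
lemma en_inj {k : ℕ} {u v : Fin k → ℝ} (h : en u = en v) : u = v := (WithLp.equiv 2 (Fin k → ℝ)).symm.injective h

lemma vecNorm_eq {k : ℕ} (v : Fin k → ℝ) : vecNorm v = ‖en v‖ := by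
  rw [EuclideanSpace.norm_eq]
  unfold vecNorm
  congr 1
  refine Finset.sum_congr rfl fun i _ => ?_
  rw [Real.norm_eq_abs, sq_abs]
  rfl

lemma inner_en {k : ℕ} (u v : Fin k → ℝ) : ⟪en u, en v⟫ = u ⬝ᵥ v := by
  simp [en, PiLp.inner_apply, RCLike.inner_apply, dotProduct]
  exact Finset.sum_congr rfl fun i _ => mul_comm _ _

lemma vecNorm_nonneg {k : ℕ} (v : Fin k → ℝ) : 0 ≤ vecNorm v := Real.sqrt_nonneg _

lemma vecNorm_eq_zero {k : ℕ} {v : Fin k → ℝ} (h : vecNorm v = 0) : v = 0 := by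
  rw [vecNorm_eq] at h
  exact en_inj (norm_eq_zero.mp h)

lemma vecNorm_smul {k : ℕ} (c : ℝ) (v : Fin k → ℝ) : vecNorm (c • v) = |c| * vecNorm v := by
  rw [vecNorm_eq, vecNorm_eq, en_smul, norm_smul, Real.norm_eq_abs]

lemma vecNorm_add_le {k : ℕ} (u v : Fin k → ℝ) : vecNorm (u + v) ≤ vecNorm u + vecNorm v := by
  rw [vecNorm_eq, vecNorm_eq, vecNorm_eq, en_add]; exact norm_add_le _ _

lemma dot_le_vecNorm_mul {k : ℕ} (u v : Fin k → ℝ) : u ⬝ᵥ v ≤ vecNorm u * vecNorm v := by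
  rw [vecNorm_eq, vecNorm_eq, ← inner_en]; exact real_inner_le_norm _ _


lemma isProjOn_of_inner {k : ℕ} {C : Set (Fin k → ℝ)} {x u : Fin k → ℝ} (hu : u ∈ C)
    (hVI : ∀ w ∈ C, ⟪en x - en u, en w - en u⟫ ≤ 0) : IsProjOn C x u := by
  refine ⟨hu, fun w hw => ?_⟩
  rw [vecNorm_eq, vecNorm_eq, en_sub, en_sub]
  set a : EuclideanSpace ℝ (Fin k) := en u - en x with ha
  set c : EuclideanSpace ℝ (Fin k) := en w - en u with hc
  have hwx : en w - en x = c + a := by rw [ha, hc]; abel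
  rw [hwx]
  have h1 : ⟪c, a⟫ ≥ 0 := by
    have := hVI w hw
    have : ⟪en x - en u, c⟫ ≤ 0 := this
    have h2 : ⟪a, c⟫ = -⟪en x - en u, c⟫ := by
      rw [ha]; rw [← inner_neg_left]; congr 1; abel
    have : 0 ≤ ⟪a, c⟫ := by rw [h2]; linarith
    rwa [real_inner_comm] at this
  have hsq : ‖a‖ ^ 2 ≤ ‖c + a‖ ^ 2 := by
    rw [norm_add_sq_real]
    nlinarith [norm_nonneg c, real_inner_comm a c]
  calc ‖a‖ = Real.sqrt (‖a‖ ^ 2) := (Real.sqrt_sq (norm_nonneg a)).symm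
    _ ≤ Real.sqrt (‖c + a‖ ^ 2) := Real.sqrt_le_sqrt hsq
    _ = ‖c + a‖ := Real.sqrt_sq (norm_nonneg _)

lemma isProjOn_unique {k : ℕ} {C : Set (Fin k → ℝ)} (hC : Convex ℝ C) {x u v : Fin k → ℝ}
    (hu : IsProjOn C x u) (hv : IsProjOn C x v) : u = v := by
  have h1 : vecNorm (u - x) ≤ vecNorm (v - x) := hu.2 v hv.1
  have h2 : vecNorm (v - x) ≤ vecNorm (u - x) := hv.2 u hu.1
  have heq : vecNorm (u - x) = vecNorm (v - x) := le_antisymm h1 h2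
  have hwmem : (1/2 : ℝ) • u + (1/2 : ℝ) • v ∈ C :=
    hC hu.1 hv.1 (by norm_num) (by norm_num) (by norm_num)
  have h3 : vecNorm (u - x) ≤ vecNorm (((1/2 : ℝ) • u + (1/2 : ℝ) • v) - x) := hu.2 _ hwmem
  set a : EuclideanSpace ℝ (Fin k) := en (u - x) with ha
  set c : EuclideanSpace ℝ (Fin k) := en (v - x) with hc
  have hmid : en (((1/2 : ℝ) • u + (1/2 : ℝ) • v) - x) = (1/2 : ℝ) • (a + c) := by
    have hfun : ((1/2 : ℝ) • u + (1/2 : ℝ) • v) - x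
        = (1/2 : ℝ) • (u - x) + (1/2 : ℝ) • (v - x) := by
      funext i; simp [Pi.smul_apply]; ring
    rw [hfun, en_add, en_smul, en_smul, ha, hc, smul_add]
  rw [vecNorm_eq, vecNorm_eq, ← ha, ← hc] at heq
  rw [vecNorm_eq, vecNorm_eq, ← ha, hmid] at h3
  rw [norm_smul] at h3
  have hns : ‖a‖ = ‖c‖ := heq
  have hpar := parallelogram_law_with_norm ℝ a c
  have h4 : 2 * ‖a‖ ≤ ‖a + c‖ := by
    have : ‖(1/2 : ℝ)‖ = 1/2 := by norm_num [Real.norm_eq_abs]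
    rw [this] at h3; linarith
  have h5 : ‖a - c‖ = 0 := by
    nlinarith [norm_nonneg (a - c), norm_nonneg (a + c), norm_nonneg a]
  have h6 : a = c := by rwa [← sub_eq_zero, ← norm_eq_zero]
  have h7 : u - x = v - x := en_inj h6
  have := congrArg (· + x) h7
  simpa using this


section
variable {m n : ℕ} (A : Matrix (Fin m) (Fin n) ℝ)

lemma vecMul_eq_sum_aux (x : Fin m → ℝ) : x ᵥ* A = ∑ i, x i • A i := by
  funext j
  simp [Matrix.vecMul, dotProduct, Finset.sum_apply]

lemma posdef_M (ε τ : ℝ) (hε : 0 ≤ ε)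
    (hrank : LinearIndependent ℝ (fun i : Fin m => A i) ∨ 0 < ε) (hτ : 0 < τ) :
    (A * Aᵀ + (ε * τ) • (1 : Matrix (Fin m) (Fin m) ℝ)).PosDef := by
  rw [Matrix.posDef_iff_dotProduct_mulVec]
  constructor
  · have h1 : (A * Aᵀ).IsHermitian := by
      have := Matrix.isHermitian_mul_conjTranspose_self A
      rwa [Matrix.conjTranspose_eq_transpose_of_trivial] at this
    have h2 : ((ε * τ) • (1 : Matrix (Fin m) (Fin m) ℝ)).IsHermitian := by
      unfold Matrix.IsHermitian
      rw [Matrix.conjTranspose_smul, Matrix.conjTranspose_one]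
      simp
    exact h1.add h2
  · intro x hx
    have hsum : star x ⬝ᵥ ((A * Aᵀ + (ε * τ) • (1 : Matrix (Fin m) (Fin m) ℝ)) *ᵥ x)
        = (x ᵥ* A) ⬝ᵥ (x ᵥ* A) + (ε * τ) * (x ⬝ᵥ x) := by
      rw [star_trivial, Matrix.add_mulVec, dotProduct_add]
      congr 1
      · rw [← Matrix.mulVec_mulVec, Matrix.dotProduct_mulVec, Matrix.mulVec_transpose]
      · rw [Matrix.smul_mulVec, Matrix.one_mulVec, dotProduct_smul]
        rfl
    rw [hsum]
    have hAA : 0 ≤ (x ᵥ* A) ⬝ᵥ (x ᵥ* A) :=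
      Finset.sum_nonneg fun j _ => mul_self_nonneg _
    have hxx : 0 < x ⬝ᵥ x := by
      have : x ⬝ᵥ x ≠ 0 := fun h => hx (dotProduct_self_eq_zero.mp h)
      have h0 : 0 ≤ x ⬝ᵥ x := Finset.sum_nonneg fun j _ => mul_self_nonneg _
      exact lt_of_le_of_ne h0 (Ne.symm this)
    rcases hrank with hli | hεpos
    · have hA : (x ᵥ* A) ⬝ᵥ (x ᵥ* A) ≠ 0 := by
        intro h
        have hv : x ᵥ* A = 0 := dotProduct_self_eq_zero.mp h
        rw [vecMul_eq_sum_aux] at hv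
        have := (Fintype.linearIndependent_iff.mp hli) x hv
        exact hx (funext this)
      have : 0 < (x ᵥ* A) ⬝ᵥ (x ᵥ* A) := lt_of_le_of_ne hAA (Ne.symm hA)
      nlinarith [mul_nonneg (mul_nonneg hε hτ.le) hxx.le]
    · nlinarith [mul_pos (mul_pos hεpos hτ) hxx]

end


lemma dot_self_eq_vecNorm_sq {k : ℕ} (v : Fin k → ℝ) : v ⬝ᵥ v = vecNorm v ^ 2 := by
  unfold vecNorm
  rw [Real.sq_sqrt (Finset.sum_nonneg fun i _ => sq_nonneg _)]
  unfold dotProduct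
  exact Finset.sum_congr rfl fun i _ => (sq (v i)).symm

lemma vecNorm_sub_comm {k : ℕ} (u v : Fin k → ℝ) : vecNorm (u - v) = vecNorm (v - u) := by
  rw [vecNorm_eq, vecNorm_eq, en_sub, en_sub, norm_sub_rev]

lemma convex_C {m n : ℕ} (A : Matrix (Fin m) (Fin n) ℝ) (b : Fin m → ℝ) (ε : ℝ) :
    Convex ℝ {x : Fin n → ℝ | vecNorm (A.mulVec x - b) ≤ ε} := by
  intro w₁ h₁ w₂ h₂ s t hs ht hst
  simp only [Set.mem_setOf_eq] at h₁ h₂ ⊢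
  have hsplit : A.mulVec (s • w₁ + t • w₂) - b
      = s • (A.mulVec w₁ - b) + t • (A.mulVec w₂ - b) := by
    rw [Matrix.mulVec_add, Matrix.mulVec_smul, Matrix.mulVec_smul]
    funext i
    simp only [Pi.add_apply, Pi.sub_apply, Pi.smul_apply, smul_eq_mul]
    linear_combination (b i) * hst
  rw [hsplit]
  calc vecNorm (s • (A.mulVec w₁ - b) + t • (A.mulVec w₂ - b))
      ≤ vecNorm (s • (A.mulVec w₁ - b)) + vecNorm (t • (A.mulVec w₂ - b)) := vecNorm_add_le _ _
    _ = s * vecNorm (A.mulVec w₁ - b) + t * vecNorm (A.mulVec w₂ - b) := by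
        rw [vecNorm_smul, vecNorm_smul, abs_of_nonneg hs, abs_of_nonneg ht]
    _ ≤ s * ε + t * ε := by
        have := vecNorm_nonneg (A.mulVec w₁ - b)
        have := vecNorm_nonneg (A.mulVec w₂ - b)
        gcongr
    _ = ε := by rw [← add_mul, hst, one_mul]

section
variable {m n : ℕ} (A : Matrix (Fin m) (Fin n) ℝ) (b : Fin m → ℝ) (ε : ℝ)

lemma M_mulVec_y {τ : ℝ} (hdet : IsUnit (A * Aᵀ + (ε * τ) • (1 : Matrix (Fin m) (Fin m) ℝ)).det)
    (r : Fin m → ℝ) :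
    (A * Aᵀ) *ᵥ ((A * Aᵀ + (ε * τ) • (1 : Matrix (Fin m) (Fin m) ℝ))⁻¹ *ᵥ r)
      + (ε * τ) • ((A * Aᵀ + (ε * τ) • (1 : Matrix (Fin m) (Fin m) ℝ))⁻¹ *ᵥ r) = r := by
  set M := A * Aᵀ + (ε * τ) • (1 : Matrix (Fin m) (Fin m) ℝ) with hM
  have h1 : M *ᵥ (M⁻¹ *ᵥ r) = r := by
    rw [Matrix.mulVec_mulVec, Matrix.mul_nonsing_inv _ hdet, Matrix.one_mulVec]
  calc (A * Aᵀ) *ᵥ (M⁻¹ *ᵥ r) + (ε * τ) • (M⁻¹ *ᵥ r)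
      = M *ᵥ (M⁻¹ *ᵥ r) := by
        rw [hM, Matrix.add_mulVec, Matrix.smul_mulVec, Matrix.one_mulVec]
    _ = r := h1

lemma key_proj (hε : 0 ≤ ε)
    (hrank : LinearIndependent ℝ (fun i : Fin m => A i) ∨ 0 < ε)
    (C : Set (Fin n → ℝ)) (hC : C = {x | vecNorm (A.mulVec x - b) ≤ ε})
    (x : Fin n → ℝ) (τ : ℝ) (hτ : 0 < τ)
    (hfτ : 1 = τ * vecNorm ((A * Aᵀ + (ε * τ) • (1 : Matrix (Fin m) (Fin m) ℝ))⁻¹.mulVec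
      (A.mulVec x - b))) :
    IsProjOn C x (x - Aᵀ.mulVec ((A * Aᵀ + (ε * τ) • (1 : Matrix (Fin m) (Fin m) ℝ))⁻¹.mulVec
      (A.mulVec x - b))) := by
  set r : Fin m → ℝ := A.mulVec x - b with hr
  set M : Matrix (Fin m) (Fin m) ℝ := A * Aᵀ + (ε * τ) • 1 with hM
  set y : Fin m → ℝ := M⁻¹ *ᵥ r with hy
  set u₀ : Fin n → ℝ := x - Aᵀ *ᵥ y with hu₀
  have hpd := posdef_M A ε τ hε hrank hτ
  have hdet : IsUnit M.det := (Matrix.isUnit_iff_isUnit_det M).mp hpd.isUnit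
  have hMy := M_mulVec_y A ε hdet r
  have hres : A *ᵥ u₀ - b = (ε * τ) • y := by
    rw [hu₀, Matrix.mulVec_sub, Matrix.mulVec_mulVec]
    rw [← hM, ← hy] at hMy
    rw [sub_right_comm, ← hr, ← hMy]
    abel
  have hyν : τ * vecNorm y = 1 := hfτ.symm
  have hres_norm : vecNorm (A *ᵥ u₀ - b) = ε := by
    rw [hres, vecNorm_smul, abs_of_nonneg (by positivity)]
    calc ε * τ * vecNorm y = ε * (τ * vecNorm y) := by ring
      _ = ε := by rw [hyν, mul_one]
  have hmem : u₀ ∈ C := by rw [hC]; exact le_of_eq hres_norm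
  apply isProjOn_of_inner hmem
  intro w hw
  have hxw : en x - en u₀ = en (Aᵀ *ᵥ y) := by
    rw [← en_sub, hu₀, sub_sub_cancel]
  rw [hxw, ← en_sub, inner_en]
  have hdot : (Aᵀ *ᵥ y) ⬝ᵥ (w - u₀) = (A *ᵥ (w - u₀)) ⬝ᵥ y := by
    rw [dotProduct_comm, Matrix.dotProduct_mulVec, Matrix.vecMul_transpose]
  rw [hdot]
  have hsplit : A *ᵥ (w - u₀) = (A *ᵥ w - b) - (ε * τ) • y := by
    rw [Matrix.mulVec_sub, ← hres]; abel
  rw [hsplit, sub_dotProduct, smul_dotProduct]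
  have hwC : vecNorm (A *ᵥ w - b) ≤ ε := by rw [hC] at hw; exact hw
  have h1 : (A *ᵥ w - b) ⬝ᵥ y ≤ ε * vecNorm y := by
    calc (A *ᵥ w - b) ⬝ᵥ y ≤ vecNorm (A *ᵥ w - b) * vecNorm y := dot_le_vecNorm_mul _ _
      _ ≤ ε * vecNorm y := by
          have := vecNorm_nonneg y
          gcongr
  have h2 : (ε * τ) • (y ⬝ᵥ y) = ε * vecNorm y := by
    rw [smul_eq_mul, dot_self_eq_vecNorm_sq]
    calc ε * τ * vecNorm y ^ 2 = ε * (τ * vecNorm y) * vecNorm y := by ring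
      _ = ε * vecNorm y := by rw [hyν]; ring
  linarith [h1, h2.le, h2.ge]

end


lemma abs_dot_le {k : ℕ} (u v : Fin k → ℝ) : |u ⬝ᵥ v| ≤ vecNorm u * vecNorm v := by
  rw [← inner_en, vecNorm_eq, vecNorm_eq]
  exact abs_real_inner_le_norm _ _

section
variable {m n : ℕ} (A : Matrix (Fin m) (Fin n) ℝ)

/-- r in range of A implies r in range of A Aᵀ -/
lemma exists_z {r : Fin m → ℝ} (hr : ∃ w, A *ᵥ w = r) :
    ∃ z, (A * Aᵀ) *ᵥ z = r := by
  have hle : LinearMap.range (A * Aᵀ).mulVecLin ≤ LinearMap.range A.mulVecLin := by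
    rw [Matrix.mulVecLin_mul]
    exact LinearMap.range_comp_le_range _ _
  have hrank : (A * Aᵀ).rank = A.rank := Matrix.rank_self_mul_transpose A
  have heq : LinearMap.range (A * Aᵀ).mulVecLin = LinearMap.range A.mulVecLin :=
    Submodule.eq_of_le_of_finrank_eq hle hrank
  obtain ⟨w, hw⟩ := hr
  have : r ∈ LinearMap.range A.mulVecLin := ⟨w, hw⟩
  rw [← heq] at this
  obtain ⟨z, hz⟩ := this
  exact ⟨z, hz⟩

lemma mulVec_vecNorm_le (B : Matrix (Fin m) (Fin m) ℝ) (v : Fin m → ℝ) :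
    vecNorm (B *ᵥ v) ≤ Real.sqrt (∑ i, vecNorm (B i) ^ 2) * vecNorm v := by
  have h : ∀ i, ((B *ᵥ v) i) ^ 2 ≤ vecNorm (B i) ^ 2 * vecNorm v ^ 2 := by
    intro i
    have h1 : |B i ⬝ᵥ v| ≤ vecNorm (B i) * vecNorm v := abs_dot_le _ _
    have h2 : (B *ᵥ v) i = B i ⬝ᵥ v := rfl
    rw [h2]
    nlinarith [abs_nonneg (B i ⬝ᵥ v), sq_abs (B i ⬝ᵥ v)]
  calc vecNorm (B *ᵥ v) = Real.sqrt (∑ i, ((B *ᵥ v) i) ^ 2) := rfl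
    _ ≤ Real.sqrt (∑ i, vecNorm (B i) ^ 2 * vecNorm v ^ 2) :=
        Real.sqrt_le_sqrt (Finset.sum_le_sum fun i _ => h i)
    _ = Real.sqrt ((∑ i, vecNorm (B i) ^ 2) * vecNorm v ^ 2) := by rw [← Finset.sum_mul]
    _ = Real.sqrt (∑ i, vecNorm (B i) ^ 2) * Real.sqrt (vecNorm v ^ 2) := by
        rw [Real.sqrt_mul (Finset.sum_nonneg fun i _ => sq_nonneg _)]
    _ = Real.sqrt (∑ i, vecNorm (B i) ^ 2) * vecNorm v := by
        rw [Real.sqrt_sq (vecNorm_nonneg v)]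

lemma dot_AAt_nonneg (v : Fin m → ℝ) : 0 ≤ v ⬝ᵥ ((A * Aᵀ) *ᵥ v) := by
  rw [← Matrix.mulVec_mulVec, Matrix.dotProduct_mulVec, Matrix.mulVec_transpose]
  exact Finset.sum_nonneg fun j _ => mul_self_nonneg _

end


section
variable {m n : ℕ} (A : Matrix (Fin m) (Fin n) ℝ)


lemma small_bound (ε τ : ℝ) (hε : 0 < ε) (hτ : 0 < τ) {r z : Fin m → ℝ}
    (hz : (A * Aᵀ) *ᵥ z = r) :
    vecNorm ((A * Aᵀ + (ε * τ) • (1 : Matrix (Fin m) (Fin m) ℝ))⁻¹ *ᵥ r)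
      ≤ 2 * vecNorm z := by
  set M : Matrix (Fin m) (Fin m) ℝ := A * Aᵀ + (ε * τ) • 1 with hM
  have hpd := posdef_M A ε τ hε.le (Or.inr hε) hτ
  have hdet : IsUnit M.det := (Matrix.isUnit_iff_isUnit_det M).mp hpd.isUnit
  set v : Fin m → ℝ := M⁻¹ *ᵥ z with hv
  have hMv : (A * Aᵀ) *ᵥ v + (ε * τ) • v = z := M_mulVec_y A ε hdet z
  -- bound on v
  have hvb : ε * τ * vecNorm v ≤ vecNorm z := by
    have hd : v ⬝ᵥ z = v ⬝ᵥ ((A * Aᵀ) *ᵥ v) + (ε * τ) * (v ⬝ᵥ v) := by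
      rw [← hMv, dotProduct_add, dotProduct_smul, smul_eq_mul]
    have h1 : ε * τ * vecNorm v ^ 2 ≤ v ⬝ᵥ z := by
      rw [hd, ← dot_self_eq_vecNorm_sq]
      have := dot_AAt_nonneg A v
      nlinarith
    have h2 : v ⬝ᵥ z ≤ vecNorm v * vecNorm z := dot_le_vecNorm_mul _ _
    rcases eq_or_lt_of_le (vecNorm_nonneg v) with h0 | h0
    · rw [← h0, mul_zero]; exact vecNorm_nonneg z
    · nlinarith
  -- y = z - (ε τ) • v
  have hy : M⁻¹ *ᵥ r = z - (ε * τ) • v := by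
    have hMz : M *ᵥ (z - (ε * τ) • v) = r := by
      rw [Matrix.mulVec_sub, Matrix.mulVec_smul]
      have hMzz : M *ᵥ z = r + (ε * τ) • z := by
        rw [hM, Matrix.add_mulVec, Matrix.smul_mulVec, Matrix.one_mulVec, hz]
      have hMvv : M *ᵥ v = z := by
        rw [← hMv, hM, Matrix.add_mulVec, Matrix.smul_mulVec, Matrix.one_mulVec]
      rw [hMzz, hMvv]
      abel
    rw [← hMz, Matrix.mulVec_mulVec, Matrix.nonsing_inv_mul _ hdet, Matrix.one_mulVec]
  rw [hy]
  have : z - (ε * τ) • v = z + (-(ε * τ)) • v := by rw [neg_smul, ← sub_eq_add_neg]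
  rw [this]
  calc vecNorm (z + (-(ε * τ)) • v) ≤ vecNorm z + vecNorm ((-(ε * τ)) • v) := vecNorm_add_le _ _
    _ = vecNorm z + ε * τ * vecNorm v := by
        rw [vecNorm_smul, abs_neg, abs_of_pos (by positivity)]
    _ ≤ 2 * vecNorm z := by linarith

lemma large_bound (ε τ : ℝ) (hε : 0 ≤ ε) (hτ : 0 < τ)
    (hdet : IsUnit (A * Aᵀ + (ε * τ) • (1 : Matrix (Fin m) (Fin m) ℝ)).det) (r : Fin m → ℝ) :
    vecNorm r ≤ (Real.sqrt (∑ i, vecNorm ((A * Aᵀ) i) ^ 2) + ε * τ)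
      * vecNorm ((A * Aᵀ + (ε * τ) • (1 : Matrix (Fin m) (Fin m) ℝ))⁻¹ *ᵥ r) := by
  set y : Fin m → ℝ := (A * Aᵀ + (ε * τ) • (1 : Matrix (Fin m) (Fin m) ℝ))⁻¹ *ᵥ r with hy
  have hMy : (A * Aᵀ) *ᵥ y + (ε * τ) • y = r := M_mulVec_y A ε hdet r
  calc vecNorm r = vecNorm ((A * Aᵀ) *ᵥ y + (ε * τ) • y) := by rw [hMy]
    _ ≤ vecNorm ((A * Aᵀ) *ᵥ y) + vecNorm ((ε * τ) • y) := vecNorm_add_le _ _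
    _ ≤ Real.sqrt (∑ i, vecNorm ((A * Aᵀ) i) ^ 2) * vecNorm y + (ε * τ) * vecNorm y := by
        have h1 := mulVec_vecNorm_le (A * Aᵀ) y
        rw [vecNorm_smul, abs_of_nonneg (by positivity)]
        linarith
    _ = (Real.sqrt (∑ i, vecNorm ((A * Aᵀ) i) ^ 2) + ε * τ) * vecNorm y := by ring

lemma f_continuousOn (ε : ℝ) (hε : 0 ≤ ε)
    (hrank : LinearIndependent ℝ (fun i : Fin m => A i) ∨ 0 < ε) (r : Fin m → ℝ) :
    ContinuousOn (fun τ : ℝ =>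
      τ * vecNorm ((A * Aᵀ + (ε * τ) • (1 : Matrix (Fin m) (Fin m) ℝ))⁻¹ *ᵥ r))
      (Set.Ioi 0) := by
  have hMc : Continuous fun τ : ℝ => A * Aᵀ + (ε * τ) • (1 : Matrix (Fin m) (Fin m) ℝ) :=
    continuous_const.add ((continuous_const.mul continuous_id).smul continuous_const)
  have hdetne : ∀ τ ∈ Set.Ioi (0:ℝ),
      (A * Aᵀ + (ε * τ) • (1 : Matrix (Fin m) (Fin m) ℝ)).det ≠ 0 := fun τ hτ =>
    (posdef_M A ε τ hε hrank hτ).det_pos.ne'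
  have hinv : ContinuousOn (fun τ : ℝ =>
      (A * Aᵀ + (ε * τ) • (1 : Matrix (Fin m) (Fin m) ℝ))⁻¹) (Set.Ioi 0) := by
    have hbase : ContinuousOn (fun τ : ℝ =>
        ((A * Aᵀ + (ε * τ) • (1 : Matrix (Fin m) (Fin m) ℝ)).det)⁻¹
          • (A * Aᵀ + (ε * τ) • (1 : Matrix (Fin m) (Fin m) ℝ)).adjugate) (Set.Ioi 0) :=
      (hMc.matrix_det.continuousOn.inv₀ hdetne).smul hMc.matrix_adjugate.continuousOn
    refine hbase.congr fun τ hτ => ?_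
    rw [Matrix.inv_def, Ring.inverse_eq_inv']
  have hmv : Continuous fun N : Matrix (Fin m) (Fin m) ℝ => N *ᵥ r :=
    continuous_id.matrix_mulVec continuous_const
  have hvn : Continuous (vecNorm (k := m)) := by
    unfold vecNorm
    exact Real.continuous_sqrt.comp
      (continuous_finset_sum _ fun i _ => (continuous_apply i).pow 2)
  exact continuousOn_id.mul ((hvn.comp hmv).comp_continuousOn hinv)

end


lemma arith_large (K ε ρ yn τ : ℝ) (hK : 0 ≤ K) (hε : 0 < ε) (hρ : ε < ρ)
    (hτ : τ * (ρ - ε) = K + 1) (hτpos : 0 < τ) (hyn : 0 ≤ yn)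
    (hl : ρ ≤ (K + ε * τ) * yn) : 1 ≤ τ * yn := by
  have hKτ : 0 < K + ε * τ := by positivity
  nlinarith [mul_le_mul_of_nonneg_left hl hτpos.le]

section
variable {m n : ℕ} (A : Matrix (Fin m) (Fin n) ℝ)

lemma exists_tau (ε : ℝ) (hε : 0 ≤ ε)
    (hrank : LinearIndependent ℝ (fun i : Fin m => A i) ∨ 0 < ε)
    {r : Fin m → ℝ} (hrrange : ∃ w, A *ᵥ w = r) (hx : ε < vecNorm r) :
    ∃ τ : ℝ, 0 < τ ∧
      1 = τ * vecNorm ((A * Aᵀ + (ε * τ) • (1 : Matrix (Fin m) (Fin m) ℝ))⁻¹ *ᵥ r) := by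
  rcases eq_or_lt_of_le hε with hε0 | hεpos
  · -- ε = 0, full rank
    subst hε0
    have hfull : LinearIndependent ℝ (fun i : Fin m => A i) := by
      rcases hrank with h | h
      · exact h
      · exact absurd h (lt_irrefl 0)
    have hpd : (A * Aᵀ).PosDef := by
      have := posdef_M A 0 1 le_rfl (Or.inl hfull) one_pos
      simpa using this
    have hdet : IsUnit (A * Aᵀ).det := (Matrix.isUnit_iff_isUnit_det _).mp hpd.isUnit
    set y : Fin m → ℝ := (A * Aᵀ)⁻¹ *ᵥ r with hy
    have hAy : (A * Aᵀ) *ᵥ y = r := by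
      rw [hy, Matrix.mulVec_mulVec, Matrix.mul_nonsing_inv _ hdet, Matrix.one_mulVec]
    have hr0 : r ≠ 0 := by
      intro h
      rw [h] at hx
      simp [vecNorm] at hx
    have hy0 : y ≠ 0 := by
      intro h
      rw [h, Matrix.mulVec_zero] at hAy
      exact hr0 hAy.symm
    have hc : 0 < vecNorm y := by
      rcases eq_or_lt_of_le (vecNorm_nonneg y) with h | h
      · exact absurd (vecNorm_eq_zero h.symm) hy0
      · exact h
    refine ⟨1 / vecNorm y, by positivity, ?_⟩
    rw [zero_mul, zero_smul, add_zero, ← hy, one_div, inv_mul_cancel₀ hc.ne']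
  · -- ε > 0
    obtain ⟨z, hz⟩ := exists_z A hrrange
    set K : ℝ := Real.sqrt (∑ i, vecNorm ((A * Aᵀ) i) ^ 2) with hK
    have hK0 : 0 ≤ K := Real.sqrt_nonneg _
    set f : ℝ → ℝ := fun τ =>
      τ * vecNorm ((A * Aᵀ + (ε * τ) • (1 : Matrix (Fin m) (Fin m) ℝ))⁻¹ *ᵥ r) with hf
    set τb : ℝ := (K + 1) / (vecNorm r - ε) with hτb
    have hτbpos : 0 < τb := div_pos (by linarith) (by linarith)
    set τs : ℝ := min (1 / (2 * (2 * vecNorm z + 1))) τb with hτs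
    have hzn : 0 ≤ vecNorm z := vecNorm_nonneg z
    have hτspos : 0 < τs := lt_min (by positivity) hτbpos
    have hτsle : τs ≤ τb := min_le_right _ _
    have hfs : f τs ≤ 1 := by
      have h1 : f τs ≤ τs * (2 * vecNorm z) :=
        mul_le_mul_of_nonneg_left (small_bound A ε τs hεpos hτspos hz) hτspos.le
      have h3 : τs ≤ 1 / (2 * (2 * vecNorm z + 1)) := min_le_left _ _
      have h4 : τs * (2 * vecNorm z) ≤ (1 / (2 * (2 * vecNorm z + 1))) * (2 * vecNorm z) :=
        mul_le_mul_of_nonneg_right h3 (by positivity)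
      have h5 : (1 / (2 * (2 * vecNorm z + 1))) * (2 * vecNorm z) ≤ 1 := by
        rw [div_mul_eq_mul_div, div_le_one (by positivity)]
        nlinarith
      linarith
    have hfb : 1 ≤ f τb := by
      have hpd := posdef_M A ε τb hε hrank hτbpos
      have hdet := (Matrix.isUnit_iff_isUnit_det _).mp hpd.isUnit
      have hlarge := large_bound A ε τb hε hτbpos hdet r
      have hτbr : τb * (vecNorm r - ε) = K + 1 := by
        rw [hτb]; exact div_mul_cancel₀ _ (by linarith)
      exact arith_large K ε (vecNorm r)
        (vecNorm ((A * Aᵀ + (ε * τb) • (1 : Matrix (Fin m) (Fin m) ℝ))⁻¹ *ᵥ r)) τb hK0 hεpos hx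
        hτbr hτbpos (vecNorm_nonneg _) hlarge
    have hsub : Set.Icc τs τb ⊆ Set.Ioi 0 := fun t ht => lt_of_lt_of_le hτspos ht.1
    have hconts : ContinuousOn f (Set.Icc τs τb) :=
      (f_continuousOn A ε hε hrank r).mono hsub
    have hIVT := intermediate_value_Icc hτsle hconts
    have h1mem : (1:ℝ) ∈ Set.Icc (f τs) (f τb) := ⟨hfs, hfb⟩
    obtain ⟨τ, hτmem, hτeq⟩ := hIVT h1mem
    exact ⟨τ, lt_of_lt_of_le hτspos hτmem.1, hτeq.symm⟩

end


section
variable {m n : ℕ} (A : Matrix (Fin m) (Fin n) ℝ) (b : Fin m → ℝ)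

lemma res_eq (ε τ : ℝ)
    (hdet : IsUnit (A * Aᵀ + (ε * τ) • (1 : Matrix (Fin m) (Fin m) ℝ)).det) (x : Fin n → ℝ) :
    A *ᵥ (x - Aᵀ *ᵥ ((A * Aᵀ + (ε * τ) • (1 : Matrix (Fin m) (Fin m) ℝ))⁻¹ *ᵥ (A *ᵥ x - b))) - b
      = (ε * τ) • ((A * Aᵀ + (ε * τ) • (1 : Matrix (Fin m) (Fin m) ℝ))⁻¹ *ᵥ (A *ᵥ x - b)) := by
  set r : Fin m → ℝ := A *ᵥ x - b with hr
  set M : Matrix (Fin m) (Fin m) ℝ := A * Aᵀ + (ε * τ) • 1 with hM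
  set y : Fin m → ℝ := M⁻¹ *ᵥ r with hy
  have hMy := M_mulVec_y A ε hdet r
  rw [← hM, ← hy] at hMy
  rw [Matrix.mulVec_sub, Matrix.mulVec_mulVec, sub_right_comm, ← hr, ← hMy]
  abel

lemma tau_unique (ε : ℝ) (hε : 0 ≤ ε)
    (hrank : LinearIndependent ℝ (fun i : Fin m => A i) ∨ 0 < ε)
    (x : Fin n → ℝ) (hx : ε < vecNorm (A *ᵥ x - b))
    (τ₁ τ₂ : ℝ) (hτ₁ : 0 < τ₁) (hτ₂ : 0 < τ₂)
    (h1 : 1 = τ₁ * vecNorm ((A * Aᵀ + (ε * τ₁) • (1 : Matrix (Fin m) (Fin m) ℝ))⁻¹ *ᵥ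
      (A *ᵥ x - b)))
    (h2 : 1 = τ₂ * vecNorm ((A * Aᵀ + (ε * τ₂) • (1 : Matrix (Fin m) (Fin m) ℝ))⁻¹ *ᵥ
      (A *ᵥ x - b))) : τ₁ = τ₂ := by
  set r : Fin m → ℝ := A *ᵥ x - b with hr
  rcases eq_or_lt_of_le hε with hε0 | hεpos
  · -- ε = 0
    rw [← hε0, zero_mul, zero_smul, add_zero] at h1 h2
    set c : ℝ := vecNorm ((A * Aᵀ)⁻¹ *ᵥ r) with hc
    have hcne : c ≠ 0 := by
      intro h
      rw [h, mul_zero] at h1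
      exact one_ne_zero h1
    have : τ₁ * c = τ₂ * c := by rw [← h1, ← h2]
    exact mul_right_cancel₀ hcne this
  · -- ε > 0
    set y₁ : Fin m → ℝ := (A * Aᵀ + (ε * τ₁) • (1 : Matrix (Fin m) (Fin m) ℝ))⁻¹ *ᵥ r with hy₁
    set y₂ : Fin m → ℝ := (A * Aᵀ + (ε * τ₂) • (1 : Matrix (Fin m) (Fin m) ℝ))⁻¹ *ᵥ r with hy₂
    have hdet₁ := (Matrix.isUnit_iff_isUnit_det _).mp (posdef_M A ε τ₁ hε hrank hτ₁).isUnit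
    have hdet₂ := (Matrix.isUnit_iff_isUnit_det _).mp (posdef_M A ε τ₂ hε hrank hτ₂).isUnit
    set C : Set (Fin n → ℝ) := {x | vecNorm (A.mulVec x - b) ≤ ε} with hCdef
    have hp₁ := key_proj A b ε hε hrank C hCdef x τ₁ hτ₁ h1
    have hp₂ := key_proj A b ε hε hrank C hCdef x τ₂ hτ₂ h2
    have huu : x - Aᵀ *ᵥ y₁ = x - Aᵀ *ᵥ y₂ := isProjOn_unique (convex_C A b ε) hp₁ hp₂
    have hres₁ := res_eq A b ε τ₁ hdet₁ x
    have hres₂ := res_eq A b ε τ₂ hdet₂ x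
    rw [← hr, ← hy₁] at hres₁
    rw [← hr, ← hy₂] at hres₂
    have hsmul : (ε * τ₁) • y₁ = (ε * τ₂) • y₂ := by
      rw [← hres₁, ← hres₂, huu]
    have hs : τ₁ • y₁ = τ₂ • y₂ := by
      have : ε • (τ₁ • y₁) = ε • (τ₂ • y₂) := by
        rw [← mul_smul, ← mul_smul]; exact hsmul
      exact smul_right_injective _ hεpos.ne' this
    set s : Fin m → ℝ := τ₁ • y₁ with hsdef
    have hsnorm : vecNorm s = 1 := by
      rw [hsdef, vecNorm_smul, abs_of_pos hτ₁, ← h1]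
    have hMy₁ := M_mulVec_y A ε hdet₁ r
    have hMy₂ := M_mulVec_y A ε hdet₂ r
    rw [← hy₁] at hMy₁
    rw [← hy₂] at hMy₂
    have heq₁ : (A * Aᵀ) *ᵥ s + (ε * τ₁) • s = τ₁ • r := by
      rw [hsdef, Matrix.mulVec_smul, smul_comm (ε * τ₁) τ₁ y₁, ← smul_add, hMy₁]
    have heq₂ : (A * Aᵀ) *ᵥ s + (ε * τ₂) • s = τ₂ • r := by
      rw [hs, Matrix.mulVec_smul, smul_comm (ε * τ₂) τ₂ y₂, ← smul_add, hMy₂]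
    by_contra hne
    have hsub : ((τ₁ - τ₂) * ε) • s = (τ₁ - τ₂) • r := by
      have := congrArg₂ (· - ·) heq₁ heq₂
      rw [add_sub_add_left_eq_sub, ← sub_smul, ← sub_smul] at this
      rw [← this]
      congr 1
      ring
    have hεs : ε • s = r := by
      rw [mul_smul] at hsub
      exact smul_right_injective _ (sub_ne_zero.mpr hne) hsub
    have : vecNorm r = ε := by
      rw [← hεs, vecNorm_smul, abs_of_pos hεpos, hsnorm, mul_one]
    rw [this] at hx
    exact lt_irrefl ε hx

end


theorem stmt0 {m n : ℕ} (A : Matrix (Fin m) (Fin n) ℝ) (b : Fin m → ℝ) (ε : ℝ)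
    (hε : 0 ≤ ε)
    (hrank : LinearIndependent ℝ (fun i : Fin m => A i) ∨ 0 < ε)
    (hb : ∃ x : Fin n → ℝ, A.mulVec x = b)
    (C : Set (Fin n → ℝ)) (hC : C = {x | vecNorm (A.mulVec x - b) ≤ ε}) :
    ∀ x : Fin n → ℝ,
      (vecNorm (A.mulVec x - b) ≤ ε → ∀ u, IsProjOn C x u ↔ u = x) ∧
      (ε < vecNorm (A.mulVec x - b) →
        (∃! τ : ℝ, 0 < τ ∧
          1 = τ * vecNorm ((A * A.transpose +
            (ε * τ) • (1 : Matrix (Fin m) (Fin m) ℝ))⁻¹.mulVec (A.mulVec x - b))) ∧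
        ∀ τ : ℝ, 0 < τ →
          1 = τ * vecNorm ((A * A.transpose +
            (ε * τ) • (1 : Matrix (Fin m) (Fin m) ℝ))⁻¹.mulVec (A.mulVec x - b)) →
          ∀ u, IsProjOn C x u ↔
            u = x - A.transpose.mulVec ((A * A.transpose +
              (ε * τ) • (1 : Matrix (Fin m) (Fin m) ℝ))⁻¹.mulVec (A.mulVec x - b))) := by
  intro x
  have h0 : vecNorm (0 : Fin n → ℝ) = 0 := by simp [vecNorm]
  constructor
  · intro hx u
    constructor
    · intro hproj
      have hxC : x ∈ C := by rw [hC]; exact hx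
      have h1 := hproj.2 x hxC
      rw [sub_self, h0] at h1
      have h2 : vecNorm (u - x) = 0 := le_antisymm h1 (vecNorm_nonneg _)
      have h3 := vecNorm_eq_zero h2
      exact sub_eq_zero.mp h3
    · rintro rfl
      refine ⟨by rw [hC]; exact hx, fun w hw => ?_⟩
      rw [sub_self, h0]
      exact vecNorm_nonneg _
  · intro hx
    have hCconv : Convex ℝ C := hC ▸ convex_C A b ε
    have hrr : ∃ w, A *ᵥ w = A.mulVec x - b := by
      obtain ⟨x₀, hx₀⟩ := hb
      exact ⟨x - x₀, by rw [Matrix.mulVec_sub, hx₀]⟩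
    constructor
    · obtain ⟨τ, hτpos, hτeq⟩ := exists_tau A ε hε hrank hrr hx
      exact ⟨τ, ⟨hτpos, hτeq⟩,
        fun τ' h' => tau_unique A b ε hε hrank x hx τ' τ h'.1 hτpos h'.2 hτeq⟩
    · intro τ hτ hfτ u
      have hkey := key_proj A b ε hε hrank C hC x τ hτ hfτ
      constructor
      · intro hu; exact isProjOn_unique hCconv hu hkey
      · rintro rfl; exact hkey
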